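/- Let H₁ and H₂ be finite-dimensional Hopf algebras over ℂ with bijective antipodes, and equip H₁ ⊗ H₂ with its tensor product Hopf algebra structure. Then a positive integer n satisfies the quasi-exponent condition for H₁ ⊗ H₂ if and only if n satisfies the quasi-exponent condition for both H₁ and H₂. Consequently qexp(H₁ ⊗ H₂) equals the least common multiple of qexp(H₁) and qexp(H₂). -/

import Mathlib

open TensorProduct

/-- The maps `T_n : H → H`: `T_0 = ι ∘ ε`, and `T_{n+1} = m ∘ (T_n ⊗ S^{-2n}) ∘ Δ`, i.e.
`T_n = m_n ∘ (Id ⊗ S⁻² ⊗ S⁻⁴ ⊗ ⋯ ⊗ S^{-2n+2}) ∘ Δ_n` where `m_n = m ∘ (m_{n-1} ⊗ Id)` and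
`Δ_n = (Δ_{n-1} ⊗ Id) ∘ Δ`.  Here `Sinv` is the inverse of the antipode. -/
noncomputable def qeT (H : Type*) [Ring H] [Bialgebra ℂ H] (Sinv : H →ₗ[ℂ] H) :
    ℕ → (H →ₗ[ℂ] H)
  | 0 => Algebra.linearMap ℂ H ∘ₗ Coalgebra.counit
  | n + 1 =>
      LinearMap.mul' ℂ H ∘ₗ TensorProduct.map (qeT H Sinv n) ((Sinv ∘ₗ Sinv) ^ n)
        ∘ₗ Coalgebra.comul

/-- A positive integer `n` satisfies the quasi-exponent condition for `H` if
`∑_{k=0}^N (-1)^k (N choose k) T_{nk} = 0` for some positive integer `N`. -/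
noncomputable def qexpCond (H : Type*) [Ring H] [Bialgebra ℂ H] (Sinv : H →ₗ[ℂ] H)
    (n : ℕ) : Prop :=
  ∃ N : ℕ, 0 < N ∧
    ∑ k ∈ Finset.range (N + 1), ((-1 : ℂ) ^ k * (N.choose k : ℂ)) • qeT H Sinv (n * k) = 0
noncomputable section QexpAux

namespace QexpAux

open Coalgebra

section Conv

variable {C A : Type*} [AddCommGroup C] [Module ℂ C] [Coalgebra ℂ C]
  [Ring A] [Algebra ℂ A]

/-- Convolution product of linear maps from a coalgebra to an algebra. -/
def cmul (f g : C →ₗ[ℂ] A) : C →ₗ[ℂ] A :=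
  LinearMap.mul' ℂ A ∘ₗ TensorProduct.map f g ∘ₗ Coalgebra.comul

lemma cmul_apply_repr (f g : C →ₗ[ℂ] A) {a : C} {ι : Type*} (r : Coalgebra.Repr ℂ a ι) :
    cmul f g a = ∑ i ∈ r.index, f (r.left i) * g (r.right i) := by
  simp [cmul, ← r.eq, map_sum]

lemma cmul_assoc (f g h : C →ₗ[ℂ] A) : cmul (cmul f g) h = cmul f (cmul g h) := by
  ext a
  set r := Coalgebra.Repr.arbitrary ℂ a with hr
  set r₁ := fun i => Coalgebra.Repr.arbitrary ℂ (r.left i) with hr₁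
  set r₂ := fun i => Coalgebra.Repr.arbitrary ℂ (r.right i) with hr₂
  have key := Coalgebra.sum_map_tmul_tmul_eq (R := ℂ) f g h a (repr := r) (a₁ := r₁) (a₂ := r₂)
  have key2 := congrArg (LinearMap.mul' ℂ A ∘ₗ LinearMap.lTensor A (LinearMap.mul' ℂ A)) key
  simp only [map_sum, LinearMap.comp_apply, LinearMap.lTensor_tmul, LinearMap.mul'_apply] at key2
  calc cmul (cmul f g) h a
      = ∑ i ∈ r.index, cmul f g (r.left i) * h (r.right i) := cmul_apply_repr _ _ r
    _ = ∑ i ∈ r.index, (∑ j ∈ (r₁ i).index,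
          f ((r₁ i).left j) * g ((r₁ i).right j)) * h (r.right i) := by
        refine Finset.sum_congr rfl fun i _ => ?_
        rw [cmul_apply_repr f g (r₁ i)]
    _ = ∑ i ∈ r.index, ∑ j ∈ (r₁ i).index,
          f ((r₁ i).left j) * (g ((r₁ i).right j) * h (r.right i)) := by
        simp_rw [Finset.sum_mul, mul_assoc]
    _ = ∑ i ∈ r.index, ∑ j ∈ (r₂ i).index,
          f (r.left i) * (g ((r₂ i).left j) * h ((r₂ i).right j)) := key2.symm
    _ = ∑ i ∈ r.index, f (r.left i) * cmul g h (r.right i) := by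
        refine Finset.sum_congr rfl fun i _ => ?_
        rw [cmul_apply_repr g h (r₂ i), Finset.mul_sum]
    _ = cmul f (cmul g h) a := (cmul_apply_repr _ _ r).symm

lemma cmul_counit_left (f : C →ₗ[ℂ] A) :
    cmul (Algebra.linearMap ℂ A ∘ₗ Coalgebra.counit) f = f := by
  ext a
  set r := Coalgebra.Repr.arbitrary ℂ a with hr
  have h := congrArg (TensorProduct.lid ℂ C) (Coalgebra.sum_counit_tmul_eq (R := ℂ) r)
  simp only [map_sum, TensorProduct.lid_tmul, one_smul] at h
  rw [cmul_apply_repr _ _ r]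
  calc ∑ i ∈ r.index, (Algebra.linearMap ℂ A ∘ₗ Coalgebra.counit) (r.left i) * f (r.right i)
      = ∑ i ∈ r.index, Coalgebra.counit (R := ℂ) (r.left i) • f (r.right i) := by
        simp [Algebra.smul_def]
    _ = f (∑ i ∈ r.index, Coalgebra.counit (R := ℂ) (r.left i) • r.right i) := by
        simp [map_sum]
    _ = f a := by rw [h]

lemma cmul_counit_right (f : C →ₗ[ℂ] A) :
    cmul f (Algebra.linearMap ℂ A ∘ₗ Coalgebra.counit) = f := by
  ext a
  set r := Coalgebra.Repr.arbitrary ℂ a with hr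
  have h := congrArg (TensorProduct.rid ℂ C) (Coalgebra.sum_tmul_counit_eq (R := ℂ) r)
  simp only [map_sum, TensorProduct.rid_tmul, one_smul] at h
  rw [cmul_apply_repr _ _ r]
  calc ∑ i ∈ r.index, f (r.left i) * (Algebra.linearMap ℂ A ∘ₗ Coalgebra.counit) (r.right i)
      = ∑ i ∈ r.index, Coalgebra.counit (R := ℂ) (r.right i) • f (r.left i) := by
        simp [Algebra.smul_def, Algebra.commutes]
    _ = f (∑ i ∈ r.index, Coalgebra.counit (R := ℂ) (r.right i) • r.left i) := by
        simp [map_sum]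
    _ = f a := by rw [h]

end Conv

section QeTGeneral

variable {H : Type*} [Ring H] [Bialgebra ℂ H] (Sinv : H →ₗ[ℂ] H)

lemma qeT_zero : qeT H Sinv 0 = Algebra.linearMap ℂ H ∘ₗ Coalgebra.counit := rfl

lemma qeT_succ (n : ℕ) : qeT H Sinv (n+1) = cmul (qeT H Sinv n) ((Sinv ∘ₗ Sinv)^n) := rfl

lemma qeT_one' : qeT H Sinv 1 = LinearMap.id := by
  rw [qeT_succ, pow_zero, qeT_zero]
  rw [show ((1 : Module.End ℂ H) : H →ₗ[ℂ] H) = LinearMap.id from rfl]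
  exact cmul_counit_left _

lemma pow_comp_one (h1 : Sinv 1 = 1) (k : ℕ) : (((Sinv ∘ₗ Sinv)^k) : H →ₗ[ℂ] H) 1 = 1 := by
  induction k with
  | zero => rw [pow_zero, Module.End.one_apply]
  | succ k ih => rw [pow_succ, Module.End.mul_apply, LinearMap.comp_apply, h1, h1, ih]

lemma qeT_apply_one (h1 : Sinv 1 = 1) (k : ℕ) : qeT H Sinv k 1 = 1 := by
  induction k with
  | zero =>
    simp [qeT_zero, Bialgebra.counit_one]
  | succ k ih =>
    rw [qeT_succ, cmul, LinearMap.comp_apply, LinearMap.comp_apply, Bialgebra.comul_one,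
      Algebra.TensorProduct.one_def, TensorProduct.map_tmul, LinearMap.mul'_apply, ih,
      pow_comp_one Sinv h1, one_mul]

end QeTGeneral

variable {H : Type} [Ring H] [HopfAlgebra ℂ H]

local notation "S" => HopfAlgebra.antipode (R := ℂ) (A := H)

lemma antipode_one' : S (1 : H) = 1 := by
  have h := HopfAlgebra.mul_antipode_rTensor_comul_apply (R := ℂ) (a := (1 : H))
  simpa [Bialgebra.comul_one, Algebra.TensorProduct.one_def] using h

/-- Auxiliary representation of `comul (a*b)`. -/
def mulRepr {ι κ : Type*} (ra : Coalgebra.Repr ℂ (a : H) ι) (rb : Coalgebra.Repr ℂ (b : H) κ) :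
    Coalgebra.Repr ℂ (a * b) (ι × κ) where
  index := ra.index ×ˢ rb.index
  left := fun p => ra.left p.1 * rb.left p.2
  right := fun p => ra.right p.1 * rb.right p.2
  eq := by
    rw [Finset.sum_product]
    rw [Bialgebra.comul_mul, ← ra.eq, ← rb.eq, Finset.sum_mul_sum]
    simp [Algebra.TensorProduct.tmul_mul_tmul]

lemma comul_tensor_tmul (a : H) (b : H) :
    (Coalgebra.comul (R := ℂ) (A := H ⊗[ℂ] H)) (a ⊗ₜ b)
      = tensorTensorTensorComm ℂ H H H H ((Coalgebra.comul a) ⊗ₜ (Coalgebra.comul b)) := by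
  simp [AlgebraTensorModule.tensorTensorTensorComm_eq]

lemma counit_tensor_tmul (a : H) (b : H) :
    (Coalgebra.counit (R := ℂ) (A := H ⊗[ℂ] H)) (a ⊗ₜ b)
      = Coalgebra.counit (R := ℂ) a * Coalgebra.counit (R := ℂ) b := by
  simp [mul_comm]

lemma comul_tensor_repr (a b : H) {ι κ : Type*} (ra : Coalgebra.Repr ℂ a ι) (rb : Coalgebra.Repr ℂ b κ) :
    (Coalgebra.comul (R := ℂ) (A := H ⊗[ℂ] H)) (a ⊗ₜ b)
      = ∑ i ∈ ra.index, ∑ j ∈ rb.index,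
          (ra.left i ⊗ₜ[ℂ] rb.left j) ⊗ₜ[ℂ] (ra.right i ⊗ₜ[ℂ] rb.right j) := by
  rw [comul_tensor_tmul, ← ra.eq, ← rb.eq]
  rw [TensorProduct.sum_tmul]
  rw [map_sum]
  refine Finset.sum_congr rfl fun i _ => ?_
  rw [TensorProduct.tmul_sum, map_sum]
  simp [tensorTensorTensorComm_tmul]

lemma cmul_FM :
    cmul ((S : H →ₗ[ℂ] H) ∘ₗ LinearMap.mul' ℂ H) (LinearMap.mul' ℂ H)
      = Algebra.linearMap ℂ H ∘ₗ (Coalgebra.counit (R := ℂ) (A := H ⊗[ℂ] H)) := by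
  apply TensorProduct.ext'
  intro a b
  set ra := Coalgebra.Repr.arbitrary ℂ a
  set rb := Coalgebra.Repr.arbitrary ℂ b
  have hrep : cmul ((S : H →ₗ[ℂ] H) ∘ₗ LinearMap.mul' ℂ H) (LinearMap.mul' ℂ H) (a ⊗ₜ b)
      = ∑ i ∈ ra.index, ∑ j ∈ rb.index,
          S (ra.left i * rb.left j) * (ra.right i * rb.right j) := by
    rw [cmul, LinearMap.comp_apply, LinearMap.comp_apply, comul_tensor_repr a b ra rb]
    simp [map_sum]
  rw [hrep]
  have key := HopfAlgebra.sum_antipode_mul_eq_algebraMap_counit (R := ℂ) (mulRepr ra rb)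
  simp only [mulRepr] at key
  rw [Finset.sum_product] at key
  rw [key]
  simp [counit_tensor_tmul, Algebra.algebraMap_eq_smul_one, Bialgebra.counit_mul, mul_comm]

lemma cmul_MG :
    cmul (LinearMap.mul' ℂ H)
        (LinearMap.mul' ℂ H ∘ₗ TensorProduct.map (S : H →ₗ[ℂ] H) (S : H →ₗ[ℂ] H)
            ∘ₗ (TensorProduct.comm ℂ H H).toLinearMap)
      = Algebra.linearMap ℂ H ∘ₗ (Coalgebra.counit (R := ℂ) (A := H ⊗[ℂ] H)) := by
  apply TensorProduct.ext'
  intro a b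
  set ra := Coalgebra.Repr.arbitrary ℂ a
  set rb := Coalgebra.Repr.arbitrary ℂ b
  have hrep : cmul (LinearMap.mul' ℂ H)
        (LinearMap.mul' ℂ H ∘ₗ TensorProduct.map (S : H →ₗ[ℂ] H) (S : H →ₗ[ℂ] H)
            ∘ₗ (TensorProduct.comm ℂ H H).toLinearMap) (a ⊗ₜ b)
      = ∑ i ∈ ra.index, ∑ j ∈ rb.index,
          (ra.left i * rb.left j) * (S (rb.right j) * S (ra.right i)) := by
    rw [cmul, LinearMap.comp_apply, LinearMap.comp_apply, comul_tensor_repr a b ra rb]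
    simp [map_sum]
  rw [hrep]
  have inner : ∀ i ∈ ra.index, ∑ j ∈ rb.index,
      (ra.left i * rb.left j) * (S (rb.right j) * S (ra.right i))
        = Coalgebra.counit (R := ℂ) b • (ra.left i * S (ra.right i)) := by
    intro i _
    have : ∀ j ∈ rb.index, (ra.left i * rb.left j) * (S (rb.right j) * S (ra.right i))
        = ra.left i * ((rb.left j * S (rb.right j)) * S (ra.right i)) := by
      intro j _; simp [mul_assoc]
    rw [Finset.sum_congr rfl this, ← Finset.mul_sum, ← Finset.sum_mul,
      HopfAlgebra.sum_mul_antipode_eq_smul (R := ℂ) rb, smul_mul_assoc, one_mul, mul_smul_comm]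
  rw [Finset.sum_congr rfl inner, ← Finset.smul_sum,
    HopfAlgebra.sum_mul_antipode_eq_smul (R := ℂ) ra, LinearMap.comp_apply, counit_tensor_tmul]
  simp only [Algebra.linearMap_apply, Algebra.algebraMap_eq_smul_one, smul_smul]
  rw [mul_comm]

lemma antipode_comp_mul :
    (S : H →ₗ[ℂ] H) ∘ₗ LinearMap.mul' ℂ H
      = LinearMap.mul' ℂ H ∘ₗ TensorProduct.map (S : H →ₗ[ℂ] H) (S : H →ₗ[ℂ] H)
          ∘ₗ (TensorProduct.comm ℂ H H).toLinearMap := by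
  set F := (S : H →ₗ[ℂ] H) ∘ₗ LinearMap.mul' ℂ H
  set G := LinearMap.mul' ℂ H ∘ₗ TensorProduct.map (S : H →ₗ[ℂ] H) (S : H →ₗ[ℂ] H)
      ∘ₗ (TensorProduct.comm ℂ H H).toLinearMap
  set M := LinearMap.mul' ℂ H
  calc F = cmul F (Algebra.linearMap ℂ H ∘ₗ (Coalgebra.counit (R := ℂ) (A := H ⊗[ℂ] H))) :=
        (cmul_counit_right F).symm
    _ = cmul F (cmul M G) := by rw [cmul_MG]
    _ = cmul (cmul F M) G := (cmul_assoc F M G).symm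
    _ = cmul (Algebra.linearMap ℂ H ∘ₗ (Coalgebra.counit (R := ℂ) (A := H ⊗[ℂ] H))) G := by
        rw [cmul_FM]
    _ = G := cmul_counit_left G

lemma antipode_mul' (a b : H) : S (a * b) = S b * S a := by
  have h := LinearMap.congr_fun (antipode_comp_mul (H := H)) (a ⊗ₜ b)
  simpa using h



section SinvFacts

variable (Sinv : H →ₗ[ℂ] H)

lemma hSp (x : H) (hS : Sinv ∘ₗ (S : H →ₗ[ℂ] H) = LinearMap.id) : Sinv (S x) = x := by
  simpa using LinearMap.congr_fun hS x

lemma hS'p (x : H) (hS' : (S : H →ₗ[ℂ] H) ∘ₗ Sinv = LinearMap.id) : S (Sinv x) = x := by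
  simpa using LinearMap.congr_fun hS' x

lemma Sinv_one (hS : Sinv ∘ₗ (S : H →ₗ[ℂ] H) = LinearMap.id) : Sinv (1 : H) = 1 := by
  conv_lhs => rw [← antipode_one' (H := H)]
  rw [hSp (Sinv := Sinv) _ hS]

lemma Sinvsq_mul (hS : Sinv ∘ₗ (S : H →ₗ[ℂ] H) = LinearMap.id)
    (hS' : (S : H →ₗ[ℂ] H) ∘ₗ Sinv = LinearMap.id) (a b : H) :
    Sinv (Sinv (a * b)) = Sinv (Sinv a) * Sinv (Sinv b) := by
  have h1 : S (S (Sinv (Sinv a) * Sinv (Sinv b))) = a * b := by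
    rw [antipode_mul', antipode_mul']
    simp [hS'p (Sinv := Sinv) _ hS']
  calc Sinv (Sinv (a * b)) = Sinv (Sinv (S (S (Sinv (Sinv a) * Sinv (Sinv b))))) := by rw [h1]
    _ = Sinv (Sinv a) * Sinv (Sinv b) := by simp [hSp (Sinv := Sinv) _ hS]

lemma sigma_cmul (hS : Sinv ∘ₗ (S : H →ₗ[ℂ] H) = LinearMap.id)
    (hS' : (S : H →ₗ[ℂ] H) ∘ₗ Sinv = LinearMap.id) (f g : H →ₗ[ℂ] H) :
    (Sinv ∘ₗ Sinv) ∘ₗ cmul f g = cmul ((Sinv ∘ₗ Sinv) ∘ₗ f) ((Sinv ∘ₗ Sinv) ∘ₗ g) := by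
  ext a
  set r := Coalgebra.Repr.arbitrary ℂ a
  rw [LinearMap.comp_apply, cmul_apply_repr f g r, cmul_apply_repr _ _ r, map_sum]
  exact Finset.sum_congr rfl fun i _ => by
    simp [Sinvsq_mul (Sinv := Sinv) hS hS']

/-- The operator `f ↦ Id * (S⁻² ∘ f)` (convolution) on `End H`. -/
def Phi : Module.End ℂ (H →ₗ[ℂ] H) where
  toFun f := cmul LinearMap.id ((Sinv ∘ₗ Sinv) ∘ₗ f)
  map_add' f g := by
    simp only [LinearMap.comp_add, cmul, map_add_right, LinearMap.add_comp, LinearMap.comp_add]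
  map_smul' c f := by
    simp only [LinearMap.comp_smul, cmul, map_smul_right, LinearMap.smul_comp,
      LinearMap.comp_smul, RingHom.id_apply]

lemma Phi_apply (f : H →ₗ[ℂ] H) : Phi Sinv f = cmul LinearMap.id ((Sinv ∘ₗ Sinv) ∘ₗ f) := rfl

lemma comp_counit_unit (hS : Sinv ∘ₗ (S : H →ₗ[ℂ] H) = LinearMap.id) :
    (Sinv ∘ₗ Sinv) ∘ₗ (Algebra.linearMap ℂ H ∘ₗ (Coalgebra.counit (R := ℂ) (A := H)))
    = Algebra.linearMap ℂ H ∘ₗ (Coalgebra.counit (R := ℂ) (A := H)) := by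
  ext x
  simp [Algebra.algebraMap_eq_smul_one, Sinv_one (Sinv := Sinv) hS]

lemma Phi_qeT (hS : Sinv ∘ₗ (S : H →ₗ[ℂ] H) = LinearMap.id)
    (hS' : (S : H →ₗ[ℂ] H) ∘ₗ Sinv = LinearMap.id) (k : ℕ) : Phi Sinv (qeT H Sinv k) = qeT H Sinv (k+1) := by
  induction k with
  | zero =>
    rw [Phi_apply, qeT_zero, comp_counit_unit (Sinv := Sinv) hS, cmul_counit_right, qeT_one']
  | succ k ih =>
    rw [qeT_succ, Phi_apply, qeT_succ, sigma_cmul (Sinv := Sinv) hS hS', ← cmul_assoc,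
      ← Phi_apply, ih]
    congr 1
    rw [pow_succ']
    rfl

lemma T_eq (hS : Sinv ∘ₗ (S : H →ₗ[ℂ] H) = LinearMap.id)
    (hS' : (S : H →ₗ[ℂ] H) ∘ₗ Sinv = LinearMap.id) (k : ℕ) : qeT H Sinv k = ((Phi Sinv)^k) (qeT H Sinv 0) := by
  induction k with
  | zero => simp
  | succ k ih =>
    rw [pow_succ', Module.End.mul_apply, ← ih, Phi_qeT (Sinv := Sinv) hS hS']

/-- Inverse of `Phi`. -/
def PhiInv : Module.End ℂ (H →ₗ[ℂ] H) where
  toFun f := ((S : H →ₗ[ℂ] H) ∘ₗ (S : H →ₗ[ℂ] H)) ∘ₗ cmul (S : H →ₗ[ℂ] H) f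
  map_add' f g := by
    simp only [cmul, map_add_right, LinearMap.add_comp, LinearMap.comp_add]
  map_smul' c f := by
    simp only [cmul, map_smul_right, LinearMap.smul_comp, LinearMap.comp_smul, RingHom.id_apply]

lemma cmul_id_antipode : cmul LinearMap.id (S : H →ₗ[ℂ] H)
    = Algebra.linearMap ℂ H ∘ₗ Coalgebra.counit :=
  HopfAlgebra.mul_antipode_lTensor_comul

lemma cmul_antipode_id : cmul (S : H →ₗ[ℂ] H) LinearMap.id
    = Algebra.linearMap ℂ H ∘ₗ Coalgebra.counit :=
  HopfAlgebra.mul_antipode_rTensor_comul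

lemma Phi_PhiInv (f : H →ₗ[ℂ] H) (hS : Sinv ∘ₗ (S : H →ₗ[ℂ] H) = LinearMap.id) :
    Phi Sinv (PhiInv f) = f := by
  rw [Phi_apply, PhiInv]
  show cmul LinearMap.id ((Sinv ∘ₗ Sinv) ∘ₗ (((S : H →ₗ[ℂ] H) ∘ₗ (S : H →ₗ[ℂ] H)) ∘ₗ cmul (S : H →ₗ[ℂ] H) f)) = f
  rw [← LinearMap.comp_assoc]
  have h1 : (Sinv ∘ₗ Sinv) ∘ₗ ((S : H →ₗ[ℂ] H) ∘ₗ (S : H →ₗ[ℂ] H)) = LinearMap.id := by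
    ext x; simp [hSp (Sinv := Sinv) _ hS]
  rw [h1, LinearMap.id_comp, ← cmul_assoc, cmul_id_antipode, cmul_counit_left]

lemma PhiInv_Phi (f : H →ₗ[ℂ] H) (hS' : (S : H →ₗ[ℂ] H) ∘ₗ Sinv = LinearMap.id) :
    PhiInv (Phi Sinv f) = f := by
  rw [Phi_apply, PhiInv]
  show ((S : H →ₗ[ℂ] H) ∘ₗ (S : H →ₗ[ℂ] H)) ∘ₗ cmul (S : H →ₗ[ℂ] H) (cmul LinearMap.id ((Sinv ∘ₗ Sinv) ∘ₗ f)) = f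
  rw [← cmul_assoc, cmul_antipode_id, cmul_counit_left, ← LinearMap.comp_assoc]
  have h1 : ((S : H →ₗ[ℂ] H) ∘ₗ (S : H →ₗ[ℂ] H)) ∘ₗ (Sinv ∘ₗ Sinv) = LinearMap.id := by
    ext x; simp [hS'p (Sinv := Sinv) _ hS']
  rw [h1, LinearMap.id_comp]

/-- `Phi` as a unit. -/
def PhiU (hS : Sinv ∘ₗ (S : H →ₗ[ℂ] H) = LinearMap.id)
    (hS' : (S : H →ₗ[ℂ] H) ∘ₗ Sinv = LinearMap.id) : (Module.End ℂ (H →ₗ[ℂ] H))ˣ where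
  val := Phi Sinv
  inv := PhiInv (H := H)
  val_inv := LinearMap.ext fun f => by
    rw [Module.End.mul_apply, Phi_PhiInv (Sinv := Sinv) _ hS, Module.End.one_apply]
  inv_val := LinearMap.ext fun f => by
    rw [Module.End.mul_apply, PhiInv_Phi (Sinv := Sinv) _ hS', Module.End.one_apply]

section Binom

lemma one_sub_pow_eq {R : Type*} [Ring R] [Algebra ℂ R] (x : R) (N : ℕ) :
    ∑ k ∈ Finset.range (N+1), ((-1:ℂ)^k * (N.choose k : ℂ)) • x^k = (1 - x)^N := by
  rw [← neg_add_eq_sub, Commute.add_pow (Commute.one_right (-x)) N]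
  refine Finset.sum_congr rfl fun k _ => ?_
  rw [one_pow, mul_one]
  conv_rhs => rw [neg_pow]
  rw [Algebra.smul_def, map_mul, map_pow, map_neg, map_one, map_natCast,
    mul_assoc, mul_assoc, (Nat.cast_commute (N.choose k) (x^k)).eq]

lemma binom_sum_apply {V : Type*} [AddCommGroup V] [Module ℂ V]
    (Ψ : Module.End ℂ V) (v : V) (n N : ℕ) :
    ∑ k ∈ Finset.range (N+1), ((-1:ℂ)^k * (N.choose k : ℂ)) • ((Ψ^(n*k)) v)
      = ((1 - Ψ^n)^N) v := by
  rw [← one_sub_pow_eq (x := Ψ^n) N, LinearMap.sum_apply]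
  exact Finset.sum_congr rfl fun k _ => by rw [LinearMap.smul_apply, pow_mul]

end Binom

lemma cond_iff_pow (hS : Sinv ∘ₗ (S : H →ₗ[ℂ] H) = LinearMap.id)
    (hS' : (S : H →ₗ[ℂ] H) ∘ₗ Sinv = LinearMap.id) (n : ℕ) :
    qexpCond H Sinv n ↔ ∃ N, 0 < N ∧ ((1 - (Phi Sinv)^n)^N) (qeT H Sinv 0) = 0 := by
  unfold qexpCond
  refine exists_congr fun N => and_congr_right fun _ => ?_
  have h : ∑ k ∈ Finset.range (N+1), ((-1:ℂ)^k * (N.choose k : ℂ)) • qeT H Sinv (n*k)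
      = ((1 - (Phi Sinv)^n)^N) (qeT H Sinv 0) := by
    rw [← binom_sum_apply]
    exact Finset.sum_congr rfl fun k _ => by rw [T_eq (Sinv := Sinv) hS hS' (n*k)]
  rw [h]

end SinvFacts

section MapPow

lemma map_pow_end {V W : Type*} [AddCommGroup V] [AddCommGroup W] [Module ℂ V] [Module ℂ W]
    (f : Module.End ℂ V) (g : Module.End ℂ W) (k : ℕ) :
    ((TensorProduct.map f g : Module.End ℂ (V ⊗[ℂ] W)))^k = TensorProduct.map (f^k) (g^k) := by
  induction k with
  | zero =>
    rw [pow_zero, pow_zero, pow_zero]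
    apply TensorProduct.ext'
    intro u w
    simp
  | succ k ih =>
    rw [pow_succ, pow_succ, pow_succ, ih, Module.End.mul_eq_comp, ← TensorProduct.map_comp,
      ← Module.End.mul_eq_comp, ← Module.End.mul_eq_comp]

lemma tensor_nilp {V W : Type*} [AddCommGroup V] [AddCommGroup W] [Module ℂ V] [Module ℂ W]
    (Φ₁ : Module.End ℂ V) (Φ₂ : Module.End ℂ W) (e₁ : V) (e₂ : W) {n N₁ N₂ : ℕ}
    (h₁ : ((1 - Φ₁^n)^N₁) e₁ = 0) (h₂ : ((1 - Φ₂^n)^N₂) e₂ = 0) :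
    ((1 - (TensorProduct.map Φ₁ Φ₂ : Module.End ℂ (V ⊗[ℂ] W))^n)^(N₁+N₂)) (e₁ ⊗ₜ[ℂ] e₂) = 0 := by
  set X := Φ₁^n with hX
  set Y := Φ₂^n with hY
  set P : Module.End ℂ (V ⊗[ℂ] W) := TensorProduct.map (1 - X) Y with hP
  set Q : Module.End ℂ (V ⊗[ℂ] W) := TensorProduct.map 1 (1 - Y) with hQ
  have hsum : P + Q = 1 - (TensorProduct.map Φ₁ Φ₂ : Module.End ℂ (V ⊗[ℂ] W))^n := by
    rw [map_pow_end, ← hX, ← hY]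
    apply TensorProduct.ext'
    intro u w
    simp only [hP, hQ, LinearMap.add_apply, TensorProduct.map_tmul, LinearMap.sub_apply,
      Module.End.one_apply, TensorProduct.sub_tmul, TensorProduct.tmul_sub]
    abel
  have c1 : (1 - X) ∘ₗ (1 : Module.End ℂ V) = (1 : Module.End ℂ V) ∘ₗ (1 - X) := by
    rw [← Module.End.mul_eq_comp, ← Module.End.mul_eq_comp, mul_one, one_mul]
  have c2 : Y ∘ₗ (1 - Y) = (1 - Y) ∘ₗ Y := by
    rw [← Module.End.mul_eq_comp, ← Module.End.mul_eq_comp, mul_sub, sub_mul, mul_one, one_mul]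
  have hcomm : Commute P Q := by
    show P * Q = Q * P
    rw [hP, hQ, Module.End.mul_eq_comp, ← TensorProduct.map_comp, Module.End.mul_eq_comp,
      ← TensorProduct.map_comp, c1, c2]
  rw [← hsum, hcomm.add_pow, LinearMap.sum_apply]
  apply Finset.sum_eq_zero
  intro i hi
  rw [Module.End.mul_apply, Module.End.natCast_apply, map_nsmul, Module.End.mul_apply]
  have hQpow : Q^(N₁+N₂-i) = TensorProduct.map (1 : Module.End ℂ V) ((1-Y)^(N₁+N₂-i)) := by
    rw [hQ, map_pow_end, one_pow]
  have hPpow : P^i = TensorProduct.map ((1-X)^i) (Y^i) := by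
    rw [hP, map_pow_end]
  rcases le_or_gt N₁ i with hle | hlt
  · have hx : ((1-X)^i) e₁ = 0 := by
      rw [show (1-X)^i = (1-X)^(i-N₁) * (1-X)^N₁ from by rw [← pow_add, Nat.sub_add_cancel hle],
        Module.End.mul_apply, h₁, map_zero]
    rw [hQpow, hPpow, TensorProduct.map_tmul, TensorProduct.map_tmul, Module.End.one_apply, hx,
      TensorProduct.zero_tmul, smul_zero]
  · have hle2 : N₂ ≤ N₁ + N₂ - i - N₂ + N₂ := le_add_self
    have hy : ((1-Y)^(N₁+N₂-i)) e₂ = 0 := by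
      have hsub : N₁ + N₂ - i = (N₁ + N₂ - i - N₂) + N₂ := by omega
      rw [hsub, pow_add, Module.End.mul_apply, h₂, map_zero]
    rw [hQpow, TensorProduct.map_tmul, hy, TensorProduct.tmul_zero, map_zero, smul_zero]

end MapPow

section Tensor

variable {H₁ H₂ : Type} [Ring H₁] [HopfAlgebra ℂ H₁] [Ring H₂] [HopfAlgebra ℂ H₂]

lemma cmul_map_map (a c : H₁ →ₗ[ℂ] H₁) (b d : H₂ →ₗ[ℂ] H₂) :
    cmul (TensorProduct.map a b) (TensorProduct.map c d)
      = TensorProduct.map (cmul a c) (cmul b d) := by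
  have aux : ∀ (u : H₁ ⊗[ℂ] H₁) (v : H₂ ⊗[ℂ] H₂),
      LinearMap.mul' ℂ (H₁ ⊗[ℂ] H₂)
        (TensorProduct.map (TensorProduct.map a b) (TensorProduct.map c d)
          ((tensorTensorTensorComm ℂ H₁ H₁ H₂ H₂).toLinearMap (u ⊗ₜ[ℂ] v)))
      = (LinearMap.mul' ℂ H₁ (TensorProduct.map a c u)) ⊗ₜ[ℂ]
          (LinearMap.mul' ℂ H₂ (TensorProduct.map b d v)) := by
    intro u v
    induction u with
    | zero =>
      simp only [TensorProduct.zero_tmul, TensorProduct.tmul_zero, map_zero]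
    | tmul x₁ x₂ =>
      induction v with
      | zero =>
        simp only [TensorProduct.zero_tmul, TensorProduct.tmul_zero, map_zero]
      | tmul y₁ y₂ =>
        simp [tensorTensorTensorComm_tmul, Algebra.TensorProduct.tmul_mul_tmul]
      | add v₁ v₂ ih₁ ih₂ =>
        simp only [TensorProduct.tmul_add, map_add, ih₁, ih₂, TensorProduct.tmul_add]
    | add u₁ u₂ ih₁ ih₂ =>
      simp only [TensorProduct.add_tmul, map_add, ih₁, ih₂, TensorProduct.add_tmul]
  apply TensorProduct.ext'
  intro x y
  rw [cmul, LinearMap.comp_apply, LinearMap.comp_apply]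
  rw [show (Coalgebra.comul (R := ℂ) (A := H₁ ⊗[ℂ] H₂)) (x ⊗ₜ[ℂ] y)
      = (tensorTensorTensorComm ℂ H₁ H₁ H₂ H₂).toLinearMap
          ((Coalgebra.comul (R := ℂ) x) ⊗ₜ[ℂ] (Coalgebra.comul (R := ℂ) y)) from by
    simp [AlgebraTensorModule.tensorTensorTensorComm_eq]]
  rw [aux]
  simp [cmul]

lemma qeT_tensor (Sinv₁ : H₁ →ₗ[ℂ] H₁) (Sinv₂ : H₂ →ₗ[ℂ] H₂) (k : ℕ) :
    qeT (H₁ ⊗[ℂ] H₂) (TensorProduct.map Sinv₁ Sinv₂) k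
      = TensorProduct.map (qeT H₁ Sinv₁ k) (qeT H₂ Sinv₂ k) := by
  induction k with
  | zero =>
    rw [qeT_zero, qeT_zero, qeT_zero]
    apply TensorProduct.ext'
    intro x y
    rw [LinearMap.comp_apply, TensorProduct.map_tmul, LinearMap.comp_apply, LinearMap.comp_apply]
    rw [show (Coalgebra.counit (R := ℂ) (A := H₁ ⊗[ℂ] H₂)) (x ⊗ₜ[ℂ] y)
        = Coalgebra.counit (R := ℂ) x * Coalgebra.counit (R := ℂ) y from by
      simp [mul_comm]]
    simp only [Algebra.linearMap_apply, Algebra.algebraMap_eq_smul_one,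
      Algebra.TensorProduct.one_def, TensorProduct.smul_tmul', TensorProduct.tmul_smul,
      smul_smul]
    rw [mul_comm]
  | succ k ih =>
    rw [qeT_succ, qeT_succ, qeT_succ, ih]
    rw [show (TensorProduct.map Sinv₁ Sinv₂ ∘ₗ TensorProduct.map Sinv₁ Sinv₂)
        = TensorProduct.map (Sinv₁ ∘ₗ Sinv₁) (Sinv₂ ∘ₗ Sinv₂) from
      (TensorProduct.map_comp _ _ _ _).symm]
    rw [map_pow_end, cmul_map_map]

lemma tensor_forward (Sinv₁ : H₁ →ₗ[ℂ] H₁) (Sinv₂ : H₂ →ₗ[ℂ] H₂)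
    (h1 : Sinv₁ 1 = 1) (h2 : Sinv₂ 1 = 1) (n : ℕ)
    (hc : qexpCond (H₁ ⊗[ℂ] H₂) (TensorProduct.map Sinv₁ Sinv₂) n) :
    qexpCond H₁ Sinv₁ n ∧ qexpCond H₂ Sinv₂ n := by
  obtain ⟨N, hN, hsum⟩ := hc
  constructor
  · refine ⟨N, hN, ?_⟩
    ext x
    have h := LinearMap.congr_fun hsum (x ⊗ₜ[ℂ] (1 : H₂))
    simp only [LinearMap.sum_apply, LinearMap.smul_apply, LinearMap.zero_apply,
      qeT_tensor Sinv₁ Sinv₂, TensorProduct.map_tmul, qeT_apply_one Sinv₂ h2] at h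
    have h2' := congrArg ((TensorProduct.rid ℂ H₁).toLinearMap
      ∘ₗ LinearMap.lTensor H₁ (Coalgebra.counit (R := ℂ) (A := H₂))) h
    simp only [map_sum, map_smul, LinearMap.comp_apply, LinearMap.lTensor_tmul,
      Bialgebra.counit_one, LinearEquiv.coe_coe, TensorProduct.rid_tmul, one_smul,
      map_zero] at h2'
    simpa only [LinearMap.sum_apply, LinearMap.smul_apply, LinearMap.zero_apply] using h2'
  · refine ⟨N, hN, ?_⟩
    ext y
    have h := LinearMap.congr_fun hsum ((1 : H₁) ⊗ₜ[ℂ] y)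
    simp only [LinearMap.sum_apply, LinearMap.smul_apply, LinearMap.zero_apply,
      qeT_tensor Sinv₁ Sinv₂, TensorProduct.map_tmul, qeT_apply_one Sinv₁ h1] at h
    have h2' := congrArg ((TensorProduct.lid ℂ H₂).toLinearMap
      ∘ₗ LinearMap.rTensor H₂ (Coalgebra.counit (R := ℂ) (A := H₁))) h
    simp only [map_sum, map_smul, LinearMap.comp_apply, LinearMap.rTensor_tmul,
      Bialgebra.counit_one, LinearEquiv.coe_coe, TensorProduct.lid_tmul, one_smul,
      map_zero] at h2'
    simpa only [LinearMap.sum_apply, LinearMap.smul_apply, LinearMap.zero_apply] using h2'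

lemma tensor_backward (Sinv₁ : H₁ →ₗ[ℂ] H₁) (Sinv₂ : H₂ →ₗ[ℂ] H₂)
    (hS₁ : Sinv₁ ∘ₗ HopfAlgebra.antipode (R := ℂ) (A := H₁) = LinearMap.id)
    (hS₁' : HopfAlgebra.antipode (R := ℂ) (A := H₁) ∘ₗ Sinv₁ = LinearMap.id)
    (hS₂ : Sinv₂ ∘ₗ HopfAlgebra.antipode (R := ℂ) (A := H₂) = LinearMap.id)
    (hS₂' : HopfAlgebra.antipode (R := ℂ) (A := H₂) ∘ₗ Sinv₂ = LinearMap.id)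
    (n : ℕ) (hc₁ : qexpCond H₁ Sinv₁ n) (hc₂ : qexpCond H₂ Sinv₂ n) :
    qexpCond (H₁ ⊗[ℂ] H₂) (TensorProduct.map Sinv₁ Sinv₂) n := by
  obtain ⟨N₁, hN₁, h₁⟩ := (cond_iff_pow Sinv₁ hS₁ hS₁' n).mp hc₁
  obtain ⟨N₂, hN₂, h₂⟩ := (cond_iff_pow Sinv₂ hS₂ hS₂' n).mp hc₂
  refine ⟨N₁ + N₂, Nat.add_pos_left hN₁ _, ?_⟩
  have key := tensor_nilp (Phi Sinv₁) (Phi Sinv₂) (qeT H₁ Sinv₁ 0) (qeT H₂ Sinv₂ 0) h₁ h₂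
  have hterm : ∀ k, qeT (H₁ ⊗[ℂ] H₂) (TensorProduct.map Sinv₁ Sinv₂) (n*k)
      = TensorProduct.homTensorHomMap (RingHom.id ℂ) H₁ H₂ H₁ H₂
          (((TensorProduct.map (Phi Sinv₁) (Phi Sinv₂) :
              Module.End ℂ ((H₁ →ₗ[ℂ] H₁) ⊗[ℂ] (H₂ →ₗ[ℂ] H₂)))^(n*k))
            ((qeT H₁ Sinv₁ 0) ⊗ₜ[ℂ] (qeT H₂ Sinv₂ 0))) := by
    intro k
    rw [qeT_tensor, map_pow_end, TensorProduct.map_tmul, TensorProduct.homTensorHomMap_apply,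
      ← T_eq Sinv₁ hS₁ hS₁', ← T_eq Sinv₂ hS₂ hS₂']
  calc ∑ k ∈ Finset.range (N₁ + N₂ + 1), ((-1:ℂ)^k * ((N₁+N₂).choose k : ℂ)) •
          qeT (H₁ ⊗[ℂ] H₂) (TensorProduct.map Sinv₁ Sinv₂) (n*k)
      = TensorProduct.homTensorHomMap (RingHom.id ℂ) H₁ H₂ H₁ H₂
          (∑ k ∈ Finset.range (N₁ + N₂ + 1), ((-1:ℂ)^k * ((N₁+N₂).choose k : ℂ)) •
            (((TensorProduct.map (Phi Sinv₁) (Phi Sinv₂) :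
                Module.End ℂ ((H₁ →ₗ[ℂ] H₁) ⊗[ℂ] (H₂ →ₗ[ℂ] H₂)))^(n*k))
              ((qeT H₁ Sinv₁ 0) ⊗ₜ[ℂ] (qeT H₂ Sinv₂ 0)))) := by
        rw [map_sum]
        exact Finset.sum_congr rfl fun k _ => by rw [hterm k, map_smul]
    _ = 0 := by
        have hb := binom_sum_apply (TensorProduct.map (Phi Sinv₁) (Phi Sinv₂) :
          Module.End ℂ ((H₁ →ₗ[ℂ] H₁) ⊗[ℂ] (H₂ →ₗ[ℂ] H₂)))
          ((qeT H₁ Sinv₁ 0) ⊗ₜ[ℂ] (qeT H₂ Sinv₂ 0)) n (N₁ + N₂)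
        rw [key] at hb
        convert map_zero (TensorProduct.homTensorHomMap (RingHom.id ℂ) H₁ H₂ H₁ H₂) using 2

end Tensor

section CommUnip

variable {Q : Type*} [CommRing Q] (υ : Qˣ)

lemma unip_add {c d : ℤ} (hc : IsNilpotent ((1:Q) - ↑(υ^c))) (hd : IsNilpotent ((1:Q) - ↑(υ^d))) :
    IsNilpotent ((1:Q) - ↑(υ^(c+d))) := by
  have h : (1:Q) - ↑(υ^(c+d)) = ((1:Q) - ↑(υ^c)) * ↑(υ^d) + ((1:Q) - ↑(υ^d)) := by
    rw [zpow_add, Units.val_mul]; ring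
  rw [h]
  exact (Commute.all _ _).isNilpotent_add ((Commute.all _ _).isNilpotent_mul_right hc) hd

lemma unip_neg {c : ℤ} (hc : IsNilpotent ((1:Q) - ↑(υ^c))) :
    IsNilpotent ((1:Q) - ↑(υ^(-c))) := by
  have hab : (↑(υ^c) : Q) * ↑(υ^(-c)) = 1 := by
    rw [← Units.val_mul, ← zpow_add, add_neg_cancel, zpow_zero, Units.val_one]
  have h : (1:Q) - ↑(υ^(-c)) = -(((1:Q) - ↑(υ^c)) * ↑(υ^(-c))) := by
    rw [sub_mul, one_mul, hab, neg_sub]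
  rw [h]
  exact ((Commute.all _ _).isNilpotent_mul_right hc).neg

lemma unip_nat_mul {c : ℤ} (hc : IsNilpotent ((1:Q) - ↑(υ^c))) (k : ℕ) :
    IsNilpotent ((1:Q) - ↑(υ^(c * (k:ℤ)))) := by
  induction k with
  | zero =>
    rw [Nat.cast_zero, mul_zero, zpow_zero, Units.val_one, sub_self]
    exact IsNilpotent.zero
  | succ k ih =>
    rw [show ((k+1 : ℕ):ℤ) = (k:ℤ)+1 from by push_cast; ring, mul_add, mul_one]
    exact unip_add υ ih hc

lemma unip_zpow {c : ℤ} (hc : IsNilpotent ((1:Q) - ↑(υ^c))) (k : ℤ) :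
    IsNilpotent ((1:Q) - ↑(υ^(c*k))) := by
  obtain ⟨m, rfl | rfl⟩ := k.eq_nat_or_neg
  · exact unip_nat_mul υ hc m
  · rw [mul_neg]
    exact unip_neg υ (unip_nat_mul υ hc m)

lemma unip_gcd {a b : ℕ} (ha : IsNilpotent ((1:Q) - ↑(υ^(a:ℤ))))
    (hb : IsNilpotent ((1:Q) - ↑(υ^(b:ℤ)))) :
    IsNilpotent ((1:Q) - ↑(υ^((Nat.gcd a b : ℕ):ℤ))) := by
  rw [show ((Nat.gcd a b : ℕ):ℤ) = (a:ℤ) * Nat.gcdA a b + (b:ℤ) * Nat.gcdB a b from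
    Nat.gcd_eq_gcd_ab a b]
  exact unip_add υ (unip_zpow υ ha _) (unip_zpow υ hb _)

end CommUnip

section IdealMach

variable (Sinv : H →ₗ[ℂ] H)

/-- Evaluation of Laurent polynomials at `Phi`. -/
def evA (hS : Sinv ∘ₗ (S : H →ₗ[ℂ] H) = LinearMap.id)
    (hS' : (S : H →ₗ[ℂ] H) ∘ₗ Sinv = LinearMap.id) :
    AddMonoidAlgebra ℂ ℤ →ₐ[ℂ] Module.End ℂ (H →ₗ[ℂ] H) :=
  AddMonoidAlgebra.lift ℂ _ ℤ
    ((Units.coeHom _).comp (zpowersHom _ (PhiU Sinv hS hS')))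

lemma evA_single_one (hS : Sinv ∘ₗ (S : H →ₗ[ℂ] H) = LinearMap.id)
    (hS' : (S : H →ₗ[ℂ] H) ∘ₗ Sinv = LinearMap.id) : evA Sinv hS hS' (AddMonoidAlgebra.single (1:ℤ) (1:ℂ)) = Phi Sinv := by
  rw [evA, AddMonoidAlgebra.lift_single, one_smul]
  simp only [MonoidHom.coe_comp, Function.comp_apply, zpowersHom_apply, Units.coeHom_apply,
    toAdd_ofAdd, zpow_one]
  rfl

lemma evA_single_pow (hS : Sinv ∘ₗ (S : H →ₗ[ℂ] H) = LinearMap.id)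
    (hS' : (S : H →ₗ[ℂ] H) ∘ₗ Sinv = LinearMap.id) (m : ℕ) :
    evA Sinv hS hS' ((AddMonoidAlgebra.single (1:ℤ) (1:ℂ))^m) = (Phi Sinv)^m := by
  rw [map_pow, evA_single_one]

/-- The ideal of Laurent polynomials annihilating `T₀` along the `Phi`-orbit. -/
def Jid (hS : Sinv ∘ₗ (S : H →ₗ[ℂ] H) = LinearMap.id)
    (hS' : (S : H →ₗ[ℂ] H) ∘ₗ Sinv = LinearMap.id) : Ideal (AddMonoidAlgebra ℂ ℤ) where
  carrier := {p | evA Sinv hS hS' p (qeT H Sinv 0) = 0}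
  add_mem' := by
    intro p q hp hq
    simp only [Set.mem_setOf_eq, map_add, LinearMap.add_apply] at *
    rw [hp, hq, add_zero]
  zero_mem' := by simp
  smul_mem' := by
    intro c p hp
    simp only [Set.mem_setOf_eq, smul_eq_mul, map_mul, Module.End.mul_apply] at *
    rw [hp, map_zero]

lemma mem_Jid (hS : Sinv ∘ₗ (S : H →ₗ[ℂ] H) = LinearMap.id)
    (hS' : (S : H →ₗ[ℂ] H) ∘ₗ Sinv = LinearMap.id) (p : AddMonoidAlgebra ℂ ℤ) :
    p ∈ Jid Sinv hS hS' ↔ evA Sinv hS hS' p (qeT H Sinv 0) = 0 := Iff.rfl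

/-- The image of the Laurent generator in the quotient ring, as a unit. -/
def XU (hS : Sinv ∘ₗ (S : H →ₗ[ℂ] H) = LinearMap.id)
    (hS' : (S : H →ₗ[ℂ] H) ∘ₗ Sinv = LinearMap.id) :
    (AddMonoidAlgebra ℂ ℤ ⧸ Jid Sinv hS hS')ˣ where
  val := Ideal.Quotient.mk _ (AddMonoidAlgebra.single (1:ℤ) (1:ℂ))
  inv := Ideal.Quotient.mk _ (AddMonoidAlgebra.single (-1:ℤ) (1:ℂ))
  val_inv := by
    rw [← map_mul, AddMonoidAlgebra.single_mul_single, add_neg_cancel, one_mul,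
      ← AddMonoidAlgebra.one_def, map_one]
  inv_val := by
    rw [← map_mul, AddMonoidAlgebra.single_mul_single, neg_add_cancel, one_mul,
      ← AddMonoidAlgebra.one_def, map_one]

lemma XU_pow_nat (hS : Sinv ∘ₗ (S : H →ₗ[ℂ] H) = LinearMap.id)
    (hS' : (S : H →ₗ[ℂ] H) ∘ₗ Sinv = LinearMap.id) (m : ℕ) :
    ((XU Sinv hS hS' ^ (m:ℤ) : (AddMonoidAlgebra ℂ ℤ ⧸ Jid Sinv hS hS')ˣ) :
        AddMonoidAlgebra ℂ ℤ ⧸ Jid Sinv hS hS')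
      = Ideal.Quotient.mk _ ((AddMonoidAlgebra.single (1:ℤ) (1:ℂ))^m) := by
  rw [zpow_natCast, Units.val_pow_eq_pow_val,
    show ((XU Sinv hS hS' : (AddMonoidAlgebra ℂ ℤ ⧸ Jid Sinv hS hS')ˣ) :
        AddMonoidAlgebra ℂ ℤ ⧸ Jid Sinv hS hS')
      = Ideal.Quotient.mk _ (AddMonoidAlgebra.single (1:ℤ) (1:ℂ)) from rfl, ← map_pow]

lemma cond_iff_nilp (hS : Sinv ∘ₗ (S : H →ₗ[ℂ] H) = LinearMap.id)
    (hS' : (S : H →ₗ[ℂ] H) ∘ₗ Sinv = LinearMap.id) (n : ℕ) :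
    qexpCond H Sinv n ↔
      IsNilpotent ((1 : AddMonoidAlgebra ℂ ℤ ⧸ Jid Sinv hS hS')
        - ↑(XU Sinv hS hS' ^ (n:ℤ))) := by
  rw [cond_iff_pow Sinv hS hS' n, XU_pow_nat]
  have key : ∀ N : ℕ, (((1 : AddMonoidAlgebra ℂ ℤ)
      - (AddMonoidAlgebra.single (1:ℤ) (1:ℂ))^n)^N ∈ Jid Sinv hS hS')
      ↔ ((1 - (Phi Sinv)^n)^N) (qeT H Sinv 0) = 0 := by
    intro N
    rw [mem_Jid, map_pow, map_sub, map_one, evA_single_pow]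
  constructor
  · rintro ⟨N, hN, h⟩
    refine ⟨N, ?_⟩
    rw [← map_one (Ideal.Quotient.mk (Jid Sinv hS hS')), ← map_sub, ← map_pow,
      Ideal.Quotient.eq_zero_iff_mem]
    exact (key N).mpr h
  · rintro ⟨K, hK⟩
    refine ⟨K+1, Nat.succ_pos K, ?_⟩
    refine (key (K+1)).mp ?_
    have h0 : ((1 : AddMonoidAlgebra ℂ ℤ)
        - (AddMonoidAlgebra.single (1:ℤ) (1:ℂ))^n)^K ∈ Jid Sinv hS hS' := by
      rw [← Ideal.Quotient.eq_zero_iff_mem, map_pow, map_sub, map_one]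
      exact hK
    rw [pow_succ]
    exact Ideal.mul_mem_right _ _ h0

lemma cond_mul (hS : Sinv ∘ₗ (S : H →ₗ[ℂ] H) = LinearMap.id)
    (hS' : (S : H →ₗ[ℂ] H) ∘ₗ Sinv = LinearMap.id) (n d : ℕ) (hc : qexpCond H Sinv n) : qexpCond H Sinv (n*d) := by
  rw [cond_iff_nilp Sinv hS hS'] at hc ⊢
  rw [show ((n*d : ℕ):ℤ) = (n:ℤ) * (d:ℤ) from by push_cast; ring]
  exact unip_zpow _ hc _

lemma cond_gcd (hS : Sinv ∘ₗ (S : H →ₗ[ℂ] H) = LinearMap.id)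
    (hS' : (S : H →ₗ[ℂ] H) ∘ₗ Sinv = LinearMap.id) (a b : ℕ) (hca : qexpCond H Sinv a) (hcb : qexpCond H Sinv b) :
    qexpCond H Sinv (Nat.gcd a b) := by
  rw [cond_iff_nilp Sinv hS hS'] at hca hcb ⊢
  exact unip_gcd _ hca hcb

end IdealMach

lemma sInf_lemma {S₁ S₂ : Set ℕ}
    (h₁ : ∀ m ∈ S₁, 0 < m) (h₂ : ∀ m ∈ S₂, 0 < m)
    (hg₁ : ∀ a ∈ S₁, ∀ b ∈ S₁, Nat.gcd a b ∈ S₁)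
    (hg₂ : ∀ a ∈ S₂, ∀ b ∈ S₂, Nat.gcd a b ∈ S₂)
    (hm₁ : ∀ a ∈ S₁, ∀ d : ℕ, 0 < d → a*d ∈ S₁)
    (hm₂ : ∀ a ∈ S₂, ∀ d : ℕ, 0 < d → a*d ∈ S₂) :
    sInf (S₁ ∩ S₂) = Nat.lcm (sInf S₁) (sInf S₂) := by
  rcases S₁.eq_empty_or_nonempty with rfl | hne₁
  · rw [Set.empty_inter, Nat.sInf_empty]
    simp [Nat.lcm]
  rcases S₂.eq_empty_or_nonempty with rfl | hne₂
  · rw [Set.inter_empty, Nat.sInf_empty]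
    simp [Nat.lcm]
  have hmem₁ := Nat.sInf_mem hne₁
  have hmem₂ := Nat.sInf_mem hne₂
  set g₁ := sInf S₁ with hg₁def
  set g₂ := sInf S₂ with hg₂def
  have pos₁ : 0 < g₁ := h₁ _ hmem₁
  have pos₂ : 0 < g₂ := h₂ _ hmem₂
  have hdvd₁ : ∀ m ∈ S₁, g₁ ∣ m := by
    intro m hm
    have hgcd : Nat.gcd g₁ m ∈ S₁ := hg₁ _ hmem₁ _ hm
    have heq : Nat.gcd g₁ m = g₁ :=
      le_antisymm (Nat.le_of_dvd pos₁ (Nat.gcd_dvd_left _ _)) (Nat.sInf_le hgcd)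
    rw [← heq]
    exact Nat.gcd_dvd_right _ _
  have hdvd₂ : ∀ m ∈ S₂, g₂ ∣ m := by
    intro m hm
    have hgcd : Nat.gcd g₂ m ∈ S₂ := hg₂ _ hmem₂ _ hm
    have heq : Nat.gcd g₂ m = g₂ :=
      le_antisymm (Nat.le_of_dvd pos₂ (Nat.gcd_dvd_left _ _)) (Nat.sInf_le hgcd)
    rw [← heq]
    exact Nat.gcd_dvd_right _ _
  set L := Nat.lcm g₁ g₂ with hLdef
  have hLpos : 0 < L := Nat.lcm_pos pos₁ pos₂
  have hLmem : L ∈ S₁ ∩ S₂ := by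
    constructor
    · have : g₁ * (L / g₁) = L := Nat.mul_div_cancel' (Nat.dvd_lcm_left _ _)
      rw [← this]
      exact hm₁ _ hmem₁ _ (Nat.div_pos (Nat.le_of_dvd hLpos (Nat.dvd_lcm_left _ _)) pos₁)
    · have : g₂ * (L / g₂) = L := Nat.mul_div_cancel' (Nat.dvd_lcm_right _ _)
      rw [← this]
      exact hm₂ _ hmem₂ _ (Nat.div_pos (Nat.le_of_dvd hLpos (Nat.dvd_lcm_right _ _)) pos₂)
  apply le_antisymm
  · exact Nat.sInf_le hLmem
  · have hmem := Nat.sInf_mem (⟨L, hLmem⟩ : (S₁ ∩ S₂).Nonempty)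
    exact Nat.le_of_dvd (h₁ _ hmem.1)
      (Nat.lcm_dvd (hdvd₁ _ hmem.1) (hdvd₂ _ hmem.2))

end QexpAux

/-- For finite-dimensional Hopf algebras `H₁`, `H₂` over `ℂ` with bijective antipodes,
equip `H₁ ⊗ H₂` with its tensor product Hopf algebra structure (whose antipode is
`S₁ ⊗ S₂`, with inverse `Sinv₁ ⊗ Sinv₂`).  A positive integer `n` satisfies the
quasi-exponent condition for `H₁ ⊗ H₂` iff it does so for both `H₁` and `H₂`;
consequently `qexp (H₁ ⊗ H₂) = lcm (qexp H₁) (qexp H₂)`. -/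
theorem qexpCond_tensorProduct (H₁ H₂ : Type) [Ring H₁] [HopfAlgebra ℂ H₁]
    [FiniteDimensional ℂ H₁] [Ring H₂] [HopfAlgebra ℂ H₂] [FiniteDimensional ℂ H₂]
    (Sinv₁ : H₁ →ₗ[ℂ] H₁)
    (hS₁ : Sinv₁ ∘ₗ HopfAlgebra.antipode (R := ℂ) (A := H₁) = LinearMap.id)
    (hS₁' : HopfAlgebra.antipode (R := ℂ) (A := H₁) ∘ₗ Sinv₁ = LinearMap.id)
    (Sinv₂ : H₂ →ₗ[ℂ] H₂)
    (hS₂ : Sinv₂ ∘ₗ HopfAlgebra.antipode (R := ℂ) (A := H₂) = LinearMap.id)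
    (hS₂' : HopfAlgebra.antipode (R := ℂ) (A := H₂) ∘ₗ Sinv₂ = LinearMap.id) :
    (∀ n : ℕ, 0 < n →
      (qexpCond (H₁ ⊗[ℂ] H₂) (TensorProduct.map Sinv₁ Sinv₂) n ↔
        qexpCond H₁ Sinv₁ n ∧ qexpCond H₂ Sinv₂ n)) ∧
      sInf {m : ℕ | 0 < m ∧ qexpCond (H₁ ⊗[ℂ] H₂) (TensorProduct.map Sinv₁ Sinv₂) m} =
        Nat.lcm (sInf {m : ℕ | 0 < m ∧ qexpCond H₁ Sinv₁ m})
          (sInf {m : ℕ | 0 < m ∧ qexpCond H₂ Sinv₂ m}) := by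
  have hiff : ∀ n : ℕ, (qexpCond (H₁ ⊗[ℂ] H₂) (TensorProduct.map Sinv₁ Sinv₂) n ↔
      qexpCond H₁ Sinv₁ n ∧ qexpCond H₂ Sinv₂ n) := by
    intro n
    constructor
    · intro hc
      exact QexpAux.tensor_forward Sinv₁ Sinv₂ (QexpAux.Sinv_one Sinv₁ hS₁)
        (QexpAux.Sinv_one Sinv₂ hS₂) n hc
    · rintro ⟨hc₁, hc₂⟩
      exact QexpAux.tensor_backward Sinv₁ Sinv₂ hS₁ hS₁' hS₂ hS₂' n hc₁ hc₂
  refine ⟨fun n _ => hiff n, ?_⟩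
  have hset : {m : ℕ | 0 < m ∧ qexpCond (H₁ ⊗[ℂ] H₂) (TensorProduct.map Sinv₁ Sinv₂) m}
      = {m : ℕ | 0 < m ∧ qexpCond H₁ Sinv₁ m} ∩ {m : ℕ | 0 < m ∧ qexpCond H₂ Sinv₂ m} := by
    ext m
    simp only [Set.mem_setOf_eq, Set.mem_inter_iff]
    constructor
    · rintro ⟨hm, hc⟩
      obtain ⟨h1, h2⟩ := (hiff m).mp hc
      exact ⟨⟨hm, h1⟩, ⟨hm, h2⟩⟩
    · rintro ⟨⟨hm, h1⟩, ⟨-, h2⟩⟩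
      exact ⟨hm, (hiff m).mpr ⟨h1, h2⟩⟩
  rw [hset]
  apply QexpAux.sInf_lemma
  · exact fun m hm => hm.1
  · exact fun m hm => hm.1
  · intro a ha b hb
    exact ⟨Nat.gcd_pos_of_pos_left _ ha.1, QexpAux.cond_gcd Sinv₁ hS₁ hS₁' a b ha.2 hb.2⟩
  · intro a ha b hb
    exact ⟨Nat.gcd_pos_of_pos_left _ ha.1, QexpAux.cond_gcd Sinv₂ hS₂ hS₂' a b ha.2 hb.2⟩
  · intro a ha d hd
    exact ⟨Nat.mul_pos ha.1 hd, QexpAux.cond_mul Sinv₁ hS₁ hS₁' a d ha.2⟩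
  · intro a ha d hd
    exact ⟨Nat.mul_pos ha.1 hd, QexpAux.cond_mul Sinv₂ hS₂ hS₂' a d ha.2⟩
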